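/- Let ℓ₁, ℓ₂, ℓ̄₁, ℓ̄₂ be nonzero linear forms and q₁, q₂, q̄₁, q̄₂ quadratic forms in ℂ[X,Y,Z], and suppose ℓ̄₂ does not divide q̄₂. If the rank-one matrix identity (ℓ̄₂; q̄₂)·(q̄₁, ℓ̄₁) = (ℓ₂; q₂)·(q₁, ℓ₁) holds, i.e. ℓ̄₂·q̄₁ = ℓ₂·q₁, ℓ̄₂·ℓ̄₁ = ℓ₂·ℓ₁, q̄₂·q̄₁ = q₂·q₁, and q̄₂·ℓ̄₁ = q₂·ℓ₁, then there exists a ∈ ℂ, a ≠ 0, such that ℓ̄₁ = a·ℓ₁, q̄₁ = a·q₁, ℓ̄₂ = a⁻¹·ℓ₂, and q̄₂ = a⁻¹·q₂. (This uniqueness of rank-one factorizations is the key step showing that the fibres of the map α: W₅ → E are G-orbits in the blow-up description of X₄ ∪ X₅.) -/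

import Mathlib

open MvPolynomial

abbrev R3 := MvPolynomial (Fin 3) ℂ

lemma deg_sum3 (m : Fin 3 →₀ ℕ) : m.degree = m 0 + m 1 + m 2 := by
  have : m.degree = ∑ i : Fin 3, m i := by
    rw [Finsupp.degree]
    exact Finset.sum_subset (Finset.subset_univ _)
      (by intro i _ h; simpa using h)
  rw [this, Fin.sum_univ_three]

lemma deg_one_single (m : Fin 3 →₀ ℕ) (hm : m.degree = 1) :
    ∃ i, m = Finsupp.single i 1 := by
  rw [deg_sum3] at hm
  have h0 : m 0 = 1 ∧ m 1 = 0 ∧ m 2 = 0 ∨ m 0 = 0 ∧ m 1 = 1 ∧ m 2 = 0 ∨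
      m 0 = 0 ∧ m 1 = 0 ∧ m 2 = 1 := by omega
  rcases h0 with ⟨h0, h1, h2⟩ | ⟨h0, h1, h2⟩ | ⟨h0, h1, h2⟩
  · exact ⟨0, Finsupp.ext fun j => by fin_cases j <;> simp [Finsupp.single_apply, h0, h1, h2]⟩
  · exact ⟨1, Finsupp.ext fun j => by fin_cases j <;> simp [Finsupp.single_apply, h0, h1, h2]⟩
  · exact ⟨2, Finsupp.ext fun j => by fin_cases j <;> simp [Finsupp.single_apply, h0, h1, h2]⟩

lemma lin_rep {l : R3} (hl : l.IsHomogeneous 1) :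
    l = ∑ i, C (coeff (Finsupp.single i 1) l) * X i := by
  ext m
  rw [coeff_sum]
  by_cases hd : m.degree = 1
  · obtain ⟨i₀, rfl⟩ := deg_one_single m hd
    rw [Finset.sum_eq_single i₀]
    · simp [coeff_C_mul, coeff_X']
    · intro i _ hij
      simp only [coeff_C_mul, coeff_X']
      rw [if_neg, mul_zero]
      intro h
      exact hij (by simpa using (Finsupp.single_left_injective one_ne_zero h))
    · simp
  · rw [hl.coeff_eq_zero hd]
    rw [Finset.sum_eq_zero]
    intro i _
    simp only [coeff_C_mul, coeff_X']
    rw [if_neg, mul_zero]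
    rintro rfl
    exact hd (by fin_cases i <;> simp [deg_sum3, Finsupp.single_apply])

lemma prime_X3 (j : Fin 3) : Prime (X j : R3) := by
  have h0 : Prime (X 0 : R3) := by
    rw [← MulEquiv.prime_iff (finSuccEquiv ℂ 2).toMulEquiv]
    show Prime (finSuccEquiv ℂ 2 (X 0))
    rw [finSuccEquiv_X_zero]
    exact Polynomial.prime_X
  have := (MulEquiv.prime_iff (p := (X j : R3)) (renameEquiv ℂ (Equiv.swap j 0)).toMulEquiv).mp
  apply this
  have : (renameEquiv ℂ (Equiv.swap j 0)).toMulEquiv (X j : R3) = X 0 := by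
    simp [renameEquiv_apply, rename_X, Equiv.swap_apply_left]
  rw [this]
  exact h0

lemma prime_lin {l : R3} (hl : l.IsHomogeneous 1) (h0 : l ≠ 0) : Prime l := by
  classical
  set c : Fin 3 → ℂ := fun i => coeff (Finsupp.single i 1) l with hc
  have hrep : l = ∑ i, C (c i) * X i := lin_rep hl
  have hex : ∃ j, c j ≠ 0 := by
    by_contra h
    push_neg at h
    apply h0
    rw [hrep]
    simp [h]
  obtain ⟨j, hj⟩ := hex
  set S : R3 := ∑ i ∈ Finset.univ.erase j, C (c i) * X i with hS
  have hsplit : l = C (c j) * X j + S := by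
    rw [hrep]
    exact (Finset.add_sum_erase _ _ (Finset.mem_univ j)).symm
  have hCC : (C (c j) : R3) * C (c j)⁻¹ = 1 := by
    rw [← C_mul, mul_inv_cancel₀ hj, C_1]
  have hSfix : ∀ t : R3, aeval (Function.update X j t) S = S := by
    intro t
    rw [hS, map_sum]
    refine Finset.sum_congr rfl fun i hi => ?_
    have hij : i ≠ j := Finset.ne_of_mem_erase hi
    rw [map_mul, aeval_X, Function.update_of_ne hij, aeval_C, algebraMap_eq]
  have hkey : ∀ t : R3, aeval (Function.update X j t) l = C (c j) * t + S := by
    intro t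
    rw [hsplit, map_add, map_mul, aeval_X, Function.update_self, hSfix t, aeval_C, algebraMap_eq]
  set u : Fin 3 → R3 := Function.update X j l with hu
  set v : Fin 3 → R3 := Function.update X j (C (c j)⁻¹ * (X j - S)) with hv
  have hfg : (aeval u : R3 →ₐ[ℂ] R3).comp (aeval v) = AlgHom.id ℂ R3 := by
    apply algHom_ext
    intro i
    by_cases hij : i = j
    · subst hij
      rw [AlgHom.comp_apply, AlgHom.coe_id, id_eq, aeval_X, hv, Function.update_self,
        map_mul, map_sub, aeval_X, hu, Function.update_self, hSfix, aeval_C, algebraMap_eq]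
      linear_combination C (c i)⁻¹ * hsplit + X i * hCC
    · rw [AlgHom.comp_apply, AlgHom.coe_id, id_eq, aeval_X, hv, Function.update_of_ne hij,
        aeval_X, hu, Function.update_of_ne hij]
  have hgf : (aeval v : R3 →ₐ[ℂ] R3).comp (aeval u) = AlgHom.id ℂ R3 := by
    apply algHom_ext
    intro i
    by_cases hij : i = j
    · subst hij
      rw [AlgHom.comp_apply, AlgHom.coe_id, id_eq, aeval_X, hu, Function.update_self, hkey]
      linear_combination (X i - S) * hCC
    · rw [AlgHom.comp_apply, AlgHom.coe_id, id_eq, aeval_X, hu, Function.update_of_ne hij,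
        aeval_X, hv, Function.update_of_ne hij]
  set e : R3 ≃ₐ[ℂ] R3 := AlgEquiv.ofAlgHom (aeval u) (aeval v) hfg hgf with he
  have hp : Prime (e.toMulEquiv (X j)) := (MulEquiv.prime_iff e.toMulEquiv).mpr (prime_X3 j)
  have hel : e.toMulEquiv (X j) = l := by
    show (aeval u) (X j) = l
    rw [aeval_X, hu, Function.update_self]
  rwa [hel] at hp

lemma lin_dvd_lin {l l' : R3} (hl : l.IsHomogeneous 1) (hl' : l'.IsHomogeneous 1)
    (hl'0 : l' ≠ 0) (hdvd : l ∣ l') : ∃ c : ℂ, c ≠ 0 ∧ l' = C c * l := by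
  obtain ⟨w, hw⟩ := hdvd
  have hl0 : l ≠ 0 := fun h => hl'0 (by rw [hw, h, zero_mul])
  have hcalc : ∀ k : ℕ, homogeneousComponent (1 + k) (l * w) = l * homogeneousComponent k w := by
    intro k
    conv_lhs => rw [show w = ∑ i ∈ Finset.range (w.totalDegree + 1), homogeneousComponent i w
      from (sum_homogeneousComponent w).symm, Finset.mul_sum]
    rw [map_sum]
    have hterm : ∀ i, homogeneousComponent (1 + k) (l * homogeneousComponent i w)
        = if k = i then l * homogeneousComponent i w else 0 := by
      intro i
      have hmem : l * homogeneousComponent i w ∈ homogeneousSubmodule (Fin 3) ℂ (1 + i) :=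
        (mem_homogeneousSubmodule _ _).mpr (hl.mul (homogeneousComponent_isHomogeneous i w))
      rw [homogeneousComponent_of_mem hmem]
      by_cases h : k = i
      · subst h; simp
      · rw [if_neg (by omega), if_neg h]
    rw [Finset.sum_congr rfl fun i _ => hterm i]
    by_cases hk : k ∈ Finset.range (w.totalDegree + 1)
    · rw [Finset.sum_ite_eq, if_pos hk]
    · rw [Finset.sum_ite_eq, if_neg hk]
      have hlt : w.totalDegree < k := by
        simpa using hk
      rw [homogeneousComponent_eq_zero _ _ hlt, mul_zero]
  have hzero : ∀ k : ℕ, k ≠ 0 → homogeneousComponent k w = 0 := by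
    intro k hk
    have h1 : homogeneousComponent (1 + k) l' = 0 := by
      rw [homogeneousComponent_of_mem ((mem_homogeneousSubmodule _ _).mpr hl'), if_neg (by omega)]
    rw [hw, hcalc k] at h1
    exact (mul_eq_zero.mp h1).resolve_left hl0
  have hw0 : w = C (coeff 0 w) := by
    conv_lhs => rw [← sum_homogeneousComponent w]
    rw [Finset.sum_eq_single 0]
    · exact homogeneousComponent_zero w
    · intro i _ hi; exact hzero i hi
    · intro h; simp at h
  refine ⟨coeff 0 w, ?_, ?_⟩
  · intro h
    apply hl'0
    rw [hw, hw0, h]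
    simp
  · rw [hw]
    conv_lhs => rw [hw0]
    ring

/-- Uniqueness of rank-one factorizations: if `ℓ₁, ℓ₂, ℓ̄₁, ℓ̄₂` are nonzero linear forms,
`q₁, q₂, q̄₁, q̄₂` quadratic forms with `ℓ̄₂ ∤ q̄₂`, and
`(ℓ̄₂; q̄₂)·(q̄₁, ℓ̄₁) = (ℓ₂; q₂)·(q₁, ℓ₁)` entrywise, then there is `a ≠ 0` with
`ℓ̄₁ = a·ℓ₁`, `q̄₁ = a·q₁`, `ℓ̄₂ = a⁻¹·ℓ₂`, `q̄₂ = a⁻¹·q₂`. -/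
theorem stmt9 (l₁ l₂ lb₁ lb₂ q₁ q₂ qb₁ qb₂ : R3)
    (hl₁ : l₁.IsHomogeneous 1) (hl₂ : l₂.IsHomogeneous 1)
    (hlb₁ : lb₁.IsHomogeneous 1) (hlb₂ : lb₂.IsHomogeneous 1)
    (hl₁0 : l₁ ≠ 0) (hl₂0 : l₂ ≠ 0) (hlb₁0 : lb₁ ≠ 0) (hlb₂0 : lb₂ ≠ 0)
    (hq₁ : q₁.IsHomogeneous 2) (hq₂ : q₂.IsHomogeneous 2)
    (hqb₁ : qb₁.IsHomogeneous 2) (hqb₂ : qb₂.IsHomogeneous 2)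
    (hnd : ¬ lb₂ ∣ qb₂)
    (e₁ : lb₂ * qb₁ = l₂ * q₁) (e₂ : lb₂ * lb₁ = l₂ * l₁)
    (e₃ : qb₂ * qb₁ = q₂ * q₁) (e₄ : qb₂ * lb₁ = q₂ * l₁) :
    ∃ a : ℂ, a ≠ 0 ∧ lb₁ = a • l₁ ∧ qb₁ = a • q₁ ∧ lb₂ = a⁻¹ • l₂ ∧ qb₂ = a⁻¹ • q₂ := by
  have hp : Prime lb₂ := prime_lin hlb₂ hlb₂0
  -- first establish lb₂ ∣ l₂
  have hdvd : lb₂ ∣ l₂ := by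
    have h1 : lb₂ ∣ l₂ * l₁ := ⟨lb₁, e₂.symm⟩
    rcases hp.2.2 _ _ h1 with h | h
    · exact h
    · obtain ⟨c, hc0, hcl⟩ := lin_dvd_lin hlb₂ hl₁ hl₁0 h
      -- l₁ = C c * lb₂
      have h2 : lb₂ ∣ qb₂ * lb₁ := by
        rw [e₄, hcl]
        exact ⟨q₂ * C c, by ring⟩
      rcases hp.2.2 _ _ h2 with h' | h'
      · exact absurd h' hnd
      · obtain ⟨d, hd0, hdl⟩ := lin_dvd_lin hlb₂ hlb₁ hlb₁0 h'
        -- lb₁ = C d * lb₂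
        refine ⟨C (c⁻¹ * d), ?_⟩
        have hcan : lb₂ * C d = l₂ * C c := by
          apply mul_right_cancel₀ hlb₂0
          calc lb₂ * C d * lb₂ = lb₂ * (C d * lb₂) := by ring
            _ = lb₂ * lb₁ := by rw [← hdl]
            _ = l₂ * l₁ := e₂
            _ = l₂ * (C c * lb₂) := by rw [← hcl]
            _ = l₂ * C c * lb₂ := by ring
        have hCc : (C c : R3) * C c⁻¹ = 1 := by rw [← C_mul, mul_inv_cancel₀ hc0, C_1]
        calc l₂ = l₂ * (C c * C c⁻¹) := by rw [hCc, mul_one]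
          _ = (l₂ * C c) * C c⁻¹ := by ring
          _ = (lb₂ * C d) * C c⁻¹ := by rw [hcan]
          _ = lb₂ * C (c⁻¹ * d) := by rw [C_mul]; ring
  obtain ⟨a, ha0, hal⟩ := lin_dvd_lin hlb₂ hl₂ hl₂0 hdvd
  -- l₂ = C a * lb₂
  have hCa : (C a : R3) * C a⁻¹ = 1 := by rw [← C_mul, mul_inv_cancel₀ ha0, C_1]
  have hlb₁ : lb₁ = C a * l₁ := by
    apply mul_left_cancel₀ hlb₂0
    rw [e₂, hal]; ring
  have hqb₁ : qb₁ = C a * q₁ := by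
    apply mul_left_cancel₀ hlb₂0
    rw [e₁, hal]; ring
  have hlb₂' : lb₂ = C a⁻¹ * l₂ := by
    rw [hal]
    calc lb₂ = (C a * C a⁻¹) * lb₂ := by rw [hCa, one_mul]
      _ = C a⁻¹ * (C a * lb₂) := by ring
  have hqb₂ : qb₂ = C a⁻¹ * q₂ := by
    have hq : qb₂ * C a = q₂ := by
      apply mul_right_cancel₀ hl₁0
      calc qb₂ * C a * l₁ = qb₂ * (C a * l₁) := by ring
        _ = qb₂ * lb₁ := by rw [← hlb₁]
        _ = q₂ * l₁ := e₄
    calc qb₂ = qb₂ * (C a * C a⁻¹) := by rw [hCa, mul_one]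
      _ = C a⁻¹ * (qb₂ * C a) := by ring
      _ = C a⁻¹ * q₂ := by rw [hq]
  exact ⟨a, ha0, by rw [hlb₁, smul_eq_C_mul], by rw [hqb₁, smul_eq_C_mul],
    by rw [hlb₂', smul_eq_C_mul], by rw [hqb₂, smul_eq_C_mul]⟩
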